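/- If the transfer matrix D is invertible, then for every s with 1 ≤ s ≤ L the system (D,H) is s-sparse-controllable if and only if it is controllable. -/

import Mathlib

open Matrix

/-- `h` is `s`-sparse: at most `s` nonzero entries. -/
def IsSparse {L : ℕ} (s : ℕ) (h : Fin L → ℝ) : Prop :=
  {i : Fin L | h i ≠ 0}.ncard ≤ s

/-- Inputs `h 0, …, h (K-1)` steer the state `xinit` to `xfinal`:
`xfinal − D^K xinit = ∑_{k=1}^{K} D^{K−k} H h_k`. -/
def Steers {N L : ℕ} (D : Matrix (Fin N) (Fin N) ℝ) (H : Matrix (Fin N) (Fin L) ℝ)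
    (K : ℕ) (h : Fin K → Fin L → ℝ) (xinit xfinal : Fin N → ℝ) : Prop :=
  xfinal - (D ^ K) *ᵥ xinit = ∑ k : Fin K, (D ^ (K - 1 - (k : ℕ))) *ᵥ (H *ᵥ h k)

/-- The system `(D, H)` is `s`-sparse-controllable. -/
def SparseControllable (N L s : ℕ) (D : Matrix (Fin N) (Fin N) ℝ)
    (H : Matrix (Fin N) (Fin L) ℝ) : Prop :=
  ∀ xinit xfinal : Fin N → ℝ, ∃ K : ℕ, 0 < K ∧ ∃ h : Fin K → Fin L → ℝ,
    (∀ k, IsSparse s (h k)) ∧ Steers D H K h xinit xfinal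

/-- Controllability with unconstrained inputs (arbitrary finite column index type). -/
def Controllable (N : ℕ) {ι : Type*} [Fintype ι] (D : Matrix (Fin N) (Fin N) ℝ)
    (H : Matrix (Fin N) ι ℝ) : Prop :=
  ∀ xinit xfinal : Fin N → ℝ, ∃ K : ℕ, 0 < K ∧ ∃ h : Fin K → ι → ℝ,
    xfinal - (D ^ K) *ᵥ xinit = ∑ k : Fin K, (D ^ (K - 1 - (k : ℕ))) *ᵥ (H *ᵥ h k)

open Polynomial

section Aux

variable {N : ℕ} (D : Matrix (Fin N) (Fin N) ℝ)

lemma aux_sum_mulVec' {m n : Type*} [Fintype n] (M : Matrix m n ℝ) {α : Type*}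
    (s : Finset α) (f : α → n → ℝ) :
    M *ᵥ (∑ a ∈ s, f a) = ∑ a ∈ s, M *ᵥ f a :=
  map_sum M.mulVecLin f s

lemma aux_sum_mulVec {α : Type*} (s : Finset α) (f : α → Fin N → ℝ) :
    D *ᵥ (∑ a ∈ s, f a) = ∑ a ∈ s, D *ᵥ f a :=
  map_sum D.mulVecLin f s

lemma aux_pow_rep (hN : 0 < N) (p : ℕ) :
    ∃ a : Fin N → ℝ, D ^ p = ∑ j : Fin N, a j • D ^ (j : ℕ) := by
  have hmonic := D.charpoly_monic
  have hch : D.charpoly.natDegree = N := by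
    rw [D.charpoly_natDegree_eq_dim, Fintype.card_fin]
  have h1 : D.charpoly ≠ 1 := by
    intro h; rw [h] at hch; simp at hch; omega
  have hdeg : (X ^ p %ₘ D.charpoly).natDegree < N := by
    have := Polynomial.natDegree_modByMonic_lt (X ^ p) hmonic h1
    omega
  refine ⟨fun j => (X ^ p %ₘ D.charpoly).coeff j, ?_⟩
  rw [D.pow_eq_aeval_mod_charpoly p, Polynomial.aeval_eq_sum_range' hdeg,
    ← Fin.sum_univ_eq_sum_range]

lemma aux_pow_mem_span (hN : 0 < N) (v : Fin N → ℝ) (p : ℕ) :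
    D ^ p *ᵥ v ∈ Submodule.span ℝ (Set.range fun j : Fin N => D ^ (j : ℕ) *ᵥ v) := by
  obtain ⟨a, ha⟩ := aux_pow_rep D hN p
  rw [ha]
  have : (∑ j : Fin N, a j • D ^ (j : ℕ)) *ᵥ v
      = ∑ j : Fin N, a j • (D ^ (j : ℕ) *ᵥ v) := by
    induction (Finset.univ : Finset (Fin N)) using Finset.induction with
    | empty => simp [Matrix.zero_mulVec]
    | insert a s h ih =>
      rw [Finset.sum_insert h, Finset.sum_insert h, Matrix.add_mulVec,
        Matrix.smul_mulVec, ih]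
  rw [this]
  exact Submodule.sum_mem _ fun j _ => Submodule.smul_mem _ _
    (Submodule.subset_span ⟨j, rfl⟩)

end Aux

section Aux2

variable {N : ℕ} {D : Matrix (Fin N) (Fin N) ℝ}

lemma aux_exists_preimage (hN : 0 < N) (hD : IsUnit D) (v : Fin N → ℝ) (t : ℕ) :
    ∀ w ∈ Submodule.span ℝ (Set.range fun j : Fin N => D ^ (j : ℕ) *ᵥ v),
      ∃ u ∈ Submodule.span ℝ (Set.range fun j : Fin N => D ^ (j : ℕ) *ᵥ v),
        D ^ t *ᵥ u = w := by
  set W := Submodule.span ℝ (Set.range fun j : Fin N => D ^ (j : ℕ) *ᵥ v) with hW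
  induction t with
  | zero => intro w hw; exact ⟨w, hw, by simp [Matrix.one_mulVec]⟩
  | succ t ih =>
    -- first: surjectivity of D on W
    have hinv : Invertible D := hD.invertible
    have hone : ∀ w ∈ W, ∃ u ∈ W, D *ᵥ u = w := by
      set e := D.toLinearEquiv' hinv with he
      have happ : ∀ x, e x = D *ᵥ x := fun x => by
        simp [he, Matrix.toLinearEquiv', Matrix.GeneralLinearGroup.toLin,
          Matrix.toLin'_apply]
      have hmap : Submodule.map (e : (Fin N → ℝ) →ₗ[ℝ] (Fin N → ℝ)) W ≤ W := by
        rw [hW, Submodule.map_span, Submodule.span_le]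
        rintro x ⟨y, ⟨j, rfl⟩, rfl⟩
        have : e (D ^ (j : ℕ) *ᵥ v) = D ^ ((j : ℕ) + 1) *ᵥ v := by
          rw [happ, Matrix.mulVec_mulVec, ← pow_succ']
        rw [LinearEquiv.coe_coe, this]
        exact aux_pow_mem_span D hN v _
      have hfr : Module.finrank ℝ (Submodule.map (e : (Fin N → ℝ) →ₗ[ℝ] (Fin N → ℝ)) W)
          = Module.finrank ℝ W := LinearEquiv.finrank_map_eq e W
      have heq : Submodule.map (e : (Fin N → ℝ) →ₗ[ℝ] (Fin N → ℝ)) W = W :=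
        Submodule.eq_of_le_of_finrank_le hmap (le_of_eq hfr.symm)
      intro w hw
      rw [← heq] at hw
      obtain ⟨u, hu, hue⟩ := hw
      exact ⟨u, hu, by rw [← happ]; exact hue⟩
    intro w hw
    obtain ⟨u1, hu1, hu1e⟩ := hone w hw
    obtain ⟨u, hu, hue⟩ := ih u1 hu1
    refine ⟨u, hu, ?_⟩
    rw [pow_succ', ← Matrix.mulVec_mulVec, hue, hu1e]

lemma aux_rep (hN : 0 < N) (hD : IsUnit D) (v : Fin N → ℝ) (t : ℕ) (w : Fin N → ℝ)
    (hw : w ∈ Submodule.span ℝ (Set.range fun j : Fin N => D ^ (j : ℕ) *ᵥ v)) :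
    ∃ d : Fin N → ℝ, w = ∑ m : Fin N, d m • (D ^ (t + (m : ℕ)) *ᵥ v) := by
  obtain ⟨u, hu, hue⟩ := aux_exists_preimage hN hD v t w hw
  rw [Submodule.mem_span_range_iff_exists_fun] at hu
  obtain ⟨c, hc⟩ := hu
  refine ⟨c, ?_⟩
  rw [← hue, ← hc, aux_sum_mulVec]
  refine Finset.sum_congr rfl fun m _ => ?_
  simp only [Matrix.mulVecLin_apply, Matrix.mulVec_smul, Matrix.mulVec_mulVec, ← pow_add]

end Aux2

/-- If `D` is invertible, then for every `1 ≤ s ≤ L` the system `(D,H)` is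
`s`-sparse-controllable iff it is controllable. -/
theorem reversible_sparse_controllable_iff_controllable (N L : ℕ) (hN : 0 < N) (hL : 0 < L)
    (D : Matrix (Fin N) (Fin N) ℝ) (hD : IsUnit D) (H : Matrix (Fin N) (Fin L) ℝ) :
    ∀ s : ℕ, 1 ≤ s → s ≤ L →
      (SparseControllable N L s D H ↔ Controllable N D H) := by
  intro s hs1 _
  constructor
  · rintro hsc xinit xfinal
    obtain ⟨K, hK, h, _, hst⟩ := hsc xinit xfinal
    exact ⟨K, hK, h, hst⟩
  · intro hc xinit xfinal
    classical
    set K := L * N with hKdef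
    have hKpos : 0 < K := Nat.mul_pos hL hN
    set T : Fin N → ℝ := xfinal - D ^ K *ᵥ xinit with hTdef
    obtain ⟨K₀, _, h₀, heq⟩ := hc 0 T
    have hT : T = ∑ k : Fin K₀, D ^ (K₀ - 1 - (k : ℕ)) *ᵥ (H *ᵥ h₀ k) := by
      simpa [Matrix.mulVec_zero] using heq
    -- columns of H
    set c : Fin L → Fin N → ℝ := fun i => H *ᵥ Pi.single i 1 with hcdef
    have hsingle : ∀ (i : Fin L) (z : ℝ), H *ᵥ Pi.single i z = z • c i := by
      intro i z
      ext j
      simp only [hcdef, Matrix.mulVec_single, Pi.smul_apply, smul_eq_mul]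
      simp only [op_smul_eq_mul]
      ring
    have hHg : ∀ g : Fin L → ℝ, H *ᵥ g = ∑ i : Fin L, g i • c i := by
      intro g
      have hg : g = ∑ i : Fin L, (Pi.single i (g i) : Fin L → ℝ) := by
        ext j
        rw [Finset.sum_apply]
        simp [Pi.single_apply]
      conv_lhs => rw [hg]
      rw [aux_sum_mulVec' H]
      exact Finset.sum_congr rfl fun i _ => hsingle i (g i)
    -- decompose T per column
    set y : Fin L → Fin N → ℝ :=
      fun i => ∑ k : Fin K₀, h₀ k i • (D ^ (K₀ - 1 - (k : ℕ)) *ᵥ c i) with hydef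
    have hTy : T = ∑ i : Fin L, y i := by
      rw [hT]
      have hterm : ∀ k : Fin K₀, D ^ (K₀ - 1 - (k : ℕ)) *ᵥ (H *ᵥ h₀ k)
          = ∑ i : Fin L, h₀ k i • (D ^ (K₀ - 1 - (k : ℕ)) *ᵥ c i) := by
        intro k
        rw [hHg, aux_sum_mulVec]
        exact Finset.sum_congr rfl fun i _ => by rw [Matrix.mulVec_smul]
      rw [Finset.sum_congr rfl fun k _ => hterm k, Finset.sum_comm]
    have hyW : ∀ i, y i ∈ Submodule.span ℝ
        (Set.range fun j : Fin N => D ^ (j : ℕ) *ᵥ c i) := fun i =>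
      Submodule.sum_mem _ fun k _ => Submodule.smul_mem _ _
        (aux_pow_mem_span D hN (c i) _)
    choose d hd using fun i : Fin L =>
      aux_rep hN hD (c i) ((i : ℕ) * N) (y i) (hyW i)
    -- inputs indexed by powers
    have hdiv : ∀ p : Fin K, (p : ℕ) / N < L := fun p =>
      Nat.div_lt_of_lt_mul (by rw [Nat.mul_comm]; exact p.isLt)
    have hmod : ∀ p : Fin K, (p : ℕ) % N < N := fun p => Nat.mod_lt _ hN
    set g : Fin K → Fin L → ℝ := fun p =>
      Pi.single (⟨(p : ℕ) / N, hdiv p⟩ : Fin L)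
        (d ⟨(p : ℕ) / N, hdiv p⟩ ⟨(p : ℕ) % N, hmod p⟩) with hgdef
    refine ⟨K, hKpos, fun k => g k.rev, fun k => ?_, ?_⟩
    · -- sparsity
      have hsub : {i : Fin L | g k.rev i ≠ 0}
          ⊆ {(⟨((k.rev : Fin K) : ℕ) / N, hdiv _⟩ : Fin L)} := by
        intro j hj
        simp only [Set.mem_setOf_eq] at hj
        simp only [Set.mem_singleton_iff]
        by_contra hne
        apply hj
        simp only [hgdef]
        exact Pi.single_eq_of_ne hne _
      show {i : Fin L | g k.rev i ≠ 0}.ncard ≤ s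
      calc {i : Fin L | g k.rev i ≠ 0}.ncard
          ≤ ({(⟨((k.rev : Fin K) : ℕ) / N, hdiv _⟩ : Fin L)} : Set (Fin L)).ncard :=
            Set.ncard_le_ncard hsub (Set.finite_singleton _)
        _ = 1 := Set.ncard_singleton _
        _ ≤ s := hs1
    · -- steering
      show T = ∑ k : Fin K, D ^ (K - 1 - (k : ℕ)) *ᵥ (H *ᵥ g k.rev)
      have hrev : ∀ k : Fin K, K - 1 - (k : ℕ) = ((k.rev : Fin K) : ℕ) := by
        intro k
        rw [Fin.val_rev]
        omega
      calc T = ∑ i : Fin L, y i := hTy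
        _ = ∑ i : Fin L, ∑ m : Fin N, d i m • (D ^ ((i : ℕ) * N + (m : ℕ)) *ᵥ c i) :=
            Finset.sum_congr rfl fun i _ => hd i
        _ = ∑ q : Fin L × Fin N,
              d q.1 q.2 • (D ^ ((q.1 : ℕ) * N + (q.2 : ℕ)) *ᵥ c q.1) := by
            rw [Fintype.sum_prod_type]
        _ = ∑ p : Fin K, D ^ (p : ℕ) *ᵥ (H *ᵥ g p) := by
            rw [← Equiv.sum_comp (finProdFinEquiv : Fin L × Fin N ≃ Fin (L * N))
              (fun p : Fin K => D ^ (p : ℕ) *ᵥ (H *ᵥ g p))]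
            refine Finset.sum_congr rfl fun q _ => ?_
            have hval : ((finProdFinEquiv q : Fin (L * N)) : ℕ)
                = (q.2 : ℕ) + N * (q.1 : ℕ) := rfl
            have hi : (⟨((finProdFinEquiv q : Fin (L * N)) : ℕ) / N,
                hdiv (finProdFinEquiv q)⟩ : Fin L) = q.1 := Fin.ext (show
              ((finProdFinEquiv q : Fin (L * N)) : ℕ) / N = (q.1 : ℕ) by
              rw [hval, Nat.add_mul_div_left _ _ hN, Nat.div_eq_of_lt q.2.isLt,
                Nat.zero_add])
            have hm : (⟨((finProdFinEquiv q : Fin (L * N)) : ℕ) % N,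
                hmod (finProdFinEquiv q)⟩ : Fin N) = q.2 := Fin.ext (show
              ((finProdFinEquiv q : Fin (L * N)) : ℕ) % N = (q.2 : ℕ) by
              rw [hval, Nat.add_mul_mod_self_left, Nat.mod_eq_of_lt q.2.isLt])
            have hg1 : g (finProdFinEquiv q) = Pi.single q.1 (d q.1 q.2) := by
              simp only [hgdef]
              rw [hi, hm]
            have hp : ((finProdFinEquiv q : Fin (L * N)) : ℕ)
                = (q.1 : ℕ) * N + (q.2 : ℕ) := by rw [hval]; ring
            rw [hg1, hsingle, Matrix.mulVec_smul, hp]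
        _ = ∑ k : Fin K, D ^ (K - 1 - (k : ℕ)) *ᵥ (H *ᵥ g k.rev) := by
            rw [← Equiv.sum_comp (Fin.revPerm : Equiv.Perm (Fin K))
              (fun p : Fin K => D ^ (p : ℕ) *ᵥ (H *ᵥ g p))]
            refine Finset.sum_congr rfl fun k _ => ?_
            simp only [Fin.revPerm_apply]
            rw [hrev k]
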